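/- arXiv:1506.04216 — 2 statements merged into one kernel-verified Lean document; each statement's English description precedes it below -/
import Mathlib

section
/- Suppose the EXTRA iterates x^t (x^1 = Z x^0 − α ∇f(x^0), x^{t+1} = (I+Z)x^t − Z̃ x^{t−1} − α[∇f(x^t) − ∇f(x^{t−1})] for t ≥ 1, with α > 0) converge to a limit x^∞ ∈ ℝ^{Np}, where ∇f is continuous. If W, W̃ are symmetric with null(W̃ − W) = span(1_N) and null(I − W̃) ⊇ span(1_N), then the limit satisfies both KKT conditions of the consensus problem: (i) x^∞ = 1_N ⊗ w for some w ∈ ℝ^p (consensus), and (ii) (1_N ⊗ I_p)ᵀ ∇f(x^∞) = 0 (the sum of the local gradients vanishes). -/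
open Finset Filter

/-- **Limit points of EXTRA satisfy the KKT conditions of the consensus problem.**
Node `n` holds a differentiable `f n : ℝᵖ → ℝ` with continuous gradient; the EXTRA
iterates `x t : Fin N → ℝᵖ` (blockwise, with `Z = W ⊗ I`, `Z̃ = W̃ ⊗ I` acting
block by block) are assumed to converge to `xinf`.  If `W, W̃` are symmetric,
`null(W̃ − W) = span(1)` and `1 ∈ null(I − W̃)`, then the limit is a consensus
vector and the sum of the local gradients vanishes at it. -/
theorem extra_limit_point_kkt
    {N p : ℕ}
    (f : Fin N → EuclideanSpace ℝ (Fin p) → ℝ)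
    (hdiff : ∀ n, Differentiable ℝ (f n))
    (hcont : ∀ n, Continuous (fun w => gradient (f n) w))
    (α : ℝ) (hα : 0 < α)
    (W Wt : Matrix (Fin N) (Fin N) ℝ)
    (hWsym : W.IsSymm) (hWtsym : Wt.IsSymm)
    (hnulldiff : ∀ v : Fin N → ℝ, (Wt - W).mulVec v = 0 ↔ ∃ c : ℝ, v = fun _ => c)
    (hnullWt : ((1 : Matrix (Fin N) (Fin N) ℝ) - Wt).mulVec (fun _ => (1:ℝ)) = 0)
    (x : ℕ → Fin N → EuclideanSpace ℝ (Fin p))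
    (hinit : ∀ n, x 1 n = (∑ m, W n m • x 0 m) - α • gradient (f n) (x 0 n))
    (hrec : ∀ t n, x (t+2) n = x (t+1) n + (∑ m, W n m • x (t+1) m)
        - (∑ m, Wt n m • x t m)
        - α • (gradient (f n) (x (t+1) n) - gradient (f n) (x t n)))
    (xinf : Fin N → EuclideanSpace ℝ (Fin p))
    (hlim : Tendsto x atTop (nhds xinf)) :
    (∃ w, ∀ n, xinf n = w) ∧ (∑ n, gradient (f n) (xinf n)) = 0 := by
  classical
  have hlimn : ∀ n, Tendsto (fun t => x t n) atTop (nhds (xinf n)) := fun n =>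
    (tendsto_pi_nhds.mp hlim) n
  have hgrad : ∀ n, Tendsto (fun t => gradient (f n) (x t n)) atTop
      (nhds (gradient (f n) (xinf n))) := fun n =>
    ((hcont n).tendsto _).comp (hlimn n)
  have hsum_apply : ∀ (g : Fin N → EuclideanSpace ℝ (Fin p)) (i : Fin p),
      (∑ m, g m) i = ∑ m, g m i :=
    fun g i => map_sum (EuclideanSpace.projₗ (𝕜 := ℝ) i) g Finset.univ
  -- limits of the recursion: Σ W n m • xinf m = Σ Wt n m • xinf m
  have hAB : ∀ n, (∑ m, W n m • xinf m) = (∑ m, Wt n m • xinf m) := by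
    intro n
    have h1 : Tendsto (fun t => x (t+2) n) atTop (nhds (xinf n)) :=
      (hlimn n).comp (tendsto_add_atTop_nat 2)
    have h2 : Tendsto (fun t => x (t+1) n + (∑ m, W n m • x (t+1) m)
        - (∑ m, Wt n m • x t m)
        - α • (gradient (f n) (x (t+1) n) - gradient (f n) (x t n)))
        atTop (nhds (xinf n + (∑ m, W n m • xinf m) - (∑ m, Wt n m • xinf m)
          - α • (gradient (f n) (xinf n) - gradient (f n) (xinf n)))) := by
      refine Tendsto.sub (Tendsto.sub (Tendsto.add ?_ ?_) ?_) ?_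
      · exact (hlimn n).comp (tendsto_add_atTop_nat 1)
      · exact tendsto_finset_sum _ fun m _ =>
          ((hlimn m).comp (tendsto_add_atTop_nat 1)).const_smul _
      · exact tendsto_finset_sum _ fun m _ => (hlimn m).const_smul _
      · exact (((hgrad n).comp (tendsto_add_atTop_nat 1)).sub (hgrad n)).const_smul _
    have h2' : Tendsto (fun t => x (t+2) n) atTop
        (nhds (xinf n + (∑ m, W n m • xinf m) - (∑ m, Wt n m • xinf m)
          - α • (gradient (f n) (xinf n) - gradient (f n) (xinf n)))) :=
      h2.congr fun t => (hrec t n).symm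
    have heq := tendsto_nhds_unique h1 h2'
    rw [sub_self, smul_zero, sub_zero] at heq
    have h3 : (∑ m, Wt n m • xinf m) - (∑ m, W n m • xinf m) = 0 := by
      have h := sub_eq_zero.mpr heq
      rw [← h]; abel
    exact (sub_eq_zero.mp h3).symm
  -- Part (i): consensus
  have hconsensus : ∃ w, ∀ n, xinf n = w := by
    have hcoord : ∀ i : Fin p, ∃ c : ℝ, (fun n => xinf n i) = fun _ => c := by
      intro i
      apply (hnulldiff _).mp
      rw [Matrix.sub_mulVec]
      funext n
      have hW : (W.mulVec fun m => xinf m i) n = (∑ m, W n m • xinf m) i := by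
        simp [Matrix.mulVec, dotProduct, hsum_apply, PiLp.smul_apply,
          smul_eq_mul]
      have hWt : (Wt.mulVec fun m => xinf m i) n = (∑ m, Wt n m • xinf m) i := by
        simp [Matrix.mulVec, dotProduct, hsum_apply, PiLp.smul_apply,
          smul_eq_mul]
      have : (Wt.mulVec fun m => xinf m i) n = (W.mulVec fun m => xinf m i) n := by
        rw [hW, hWt, hAB n]
      simp [Pi.sub_apply, this]
    choose c hc using hcoord
    refine ⟨(WithLp.toLp 2 (fun i => c i) : EuclideanSpace ℝ (Fin p)), fun n => ?_⟩
    ext i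
    exact congrFun (hc i) n
  refine ⟨hconsensus, ?_⟩
  -- Part (ii): sum of gradients vanishes
  -- column sums of W are 1
  have hWt1 : Wt.mulVec (fun _ => (1:ℝ)) = fun _ => (1:ℝ) := by
    have h := hnullWt
    rw [Matrix.sub_mulVec, Matrix.one_mulVec, sub_eq_zero] at h
    exact h.symm
  have hW1 : W.mulVec (fun _ => (1:ℝ)) = fun _ => (1:ℝ) := by
    have h := (hnulldiff (fun _ => (1:ℝ))).mpr ⟨1, rfl⟩
    rw [Matrix.sub_mulVec, sub_eq_zero] at h
    rw [← h, hWt1]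
  have hWcol : ∀ m, (∑ n, W n m) = 1 := by
    intro m
    have : (∑ n, W m n) = 1 := by
      have := congrFun hW1 m
      simpa [Matrix.mulVec, dotProduct] using this
    rw [← this]
    exact Finset.sum_congr rfl fun n _ => (hWsym.apply n m).symm
  -- sums
  set S : ℕ → EuclideanSpace ℝ (Fin p) := fun t => ∑ n, x t n with hS
  set G : ℕ → EuclideanSpace ℝ (Fin p) := fun t => ∑ n, gradient (f n) (x t n) with hG
  have hswap : ∀ M : Matrix (Fin N) (Fin N) ℝ, (∀ m, (∑ n, M n m) = 1) →
      ∀ t : ℕ, (∑ n, ∑ m, M n m • x t m) = S t := by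
    intro M hM t
    rw [Finset.sum_comm]
    refine Finset.sum_congr rfl fun m _ => ?_
    rw [← Finset.sum_smul, hM m, one_smul]
  have hWtcol : ∀ m, (∑ n, Wt n m) = 1 := by
    intro m
    have h1 : (∑ n, Wt m n) = 1 := by
      have := congrFun hWt1 m
      simpa [Matrix.mulVec, dotProduct] using this
    rw [← h1]
    exact Finset.sum_congr rfl fun n _ => (hWtsym.apply n m).symm
  have hstep : ∀ t, S (t+1) = S t - α • G t := by
    intro t
    induction t with
    | zero =>
      have h1 : S 1 = ∑ n, ((∑ m, W n m • x 0 m) - α • gradient (f n) (x 0 n)) :=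
        Finset.sum_congr rfl fun n _ => hinit n
      rw [h1, Finset.sum_sub_distrib, hswap W hWcol 0, ← Finset.smul_sum]
    | succ t ih =>
      have h1 : S (t+2) = S (t+1) + S (t+1) - S t - α • (G (t+1) - G t) := by
        have h2 : S (t+2) = ∑ n, (x (t+1) n + (∑ m, W n m • x (t+1) m)
            - (∑ m, Wt n m • x t m)
            - α • (gradient (f n) (x (t+1) n) - gradient (f n) (x t n))) :=
          Finset.sum_congr rfl fun n _ => hrec t n
        rw [h2, Finset.sum_sub_distrib, Finset.sum_sub_distrib,
          Finset.sum_add_distrib, hswap W hWcol (t+1), hswap Wt hWtcol t,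
          ← Finset.smul_sum, Finset.sum_sub_distrib, smul_sub]
      show S (t+2) = S (t+1) - α • G (t+1)
      rw [h1, ih, smul_sub]
      abel
  -- take limits
  have hSlim : Tendsto S atTop (nhds (∑ n, xinf n)) :=
    tendsto_finset_sum _ fun n _ => hlimn n
  have hGlim : Tendsto G atTop (nhds (∑ n, gradient (f n) (xinf n))) :=
    tendsto_finset_sum _ fun n _ => hgrad n
  have hdiffLim : Tendsto (fun t => S (t+1) - S t) atTop (nhds 0) := by
    have := (hSlim.comp (tendsto_add_atTop_nat 1)).sub hSlim
    simpa using this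
  have hdiffLim2 : Tendsto (fun t => S (t+1) - S t) atTop
      (nhds (-(α • ∑ n, gradient (f n) (xinf n)))) := by
    have : Tendsto (fun t => -(α • G t)) atTop
        (nhds (-(α • ∑ n, gradient (f n) (xinf n)))) := (hGlim.const_smul α).neg
    exact this.congr fun t => by rw [hstep t]; abel
  have h0 := tendsto_nhds_unique hdiffLim hdiffLim2
  have : α • (∑ n, gradient (f n) (xinf n)) = 0 := by
    rw [← neg_eq_zero, ← h0]
  exact (smul_eq_zero.mp this).resolve_left (ne_of_gt hα)
end

section
/- Let (x^t)_{t≥0} in ℝ^{Np} satisfy the EXTRA recursion x^1 = Z x^0 − α ∇f(x^0) and x^{t+1} = (I+Z)x^t − Z̃ x^{t−1} − α[∇f(x^t) − ∇f(x^{t−1})] for t ≥ 1, where Z ⪯ Z̃ so that U = (Z̃ − Z)^{1/2} is well defined. Define the dual sequence v^t = Σ_{s=0}^{t} U x^s. Then the pair (x^t, v^t) satisfies the saddle point (primal-dual) recursion: x^{t+1} = x^t − [α ∇f(x^t) + (I − Z̃) x^t + U v^t] and v^{t+1} = v^t + U x^{t+1} for all t ≥ 0; i.e., EXTRA is a saddle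 point method with stepsize α applied to the augmented Lagrangian L(x,v) = f(x) + (1/α) vᵀ U x + (1/2α) xᵀ(I − Z̃)x. -/
open Finset

/-- The action of an `Np × Np` matrix on a vector of `ℝ^{Np}`. -/
noncomputable def mAct {d : ℕ} (Z : Matrix (Fin d) (Fin d) ℝ) (x : EuclideanSpace ℝ (Fin d)) :
    EuclideanSpace ℝ (Fin d) := WithLp.toLp 2 (Z.mulVec x)

lemma mAct_add {d : ℕ} (A : Matrix (Fin d) (Fin d) ℝ) (x y : EuclideanSpace ℝ (Fin d)) :
    mAct A (x + y) = mAct A x + mAct A y := by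
  simp only [mAct]
  ext i
  simp [Matrix.mulVec, dotProduct, PiLp.add_apply, mul_add, Finset.sum_add_distrib]

lemma mAct_sub {d : ℕ} (A : Matrix (Fin d) (Fin d) ℝ) (x y : EuclideanSpace ℝ (Fin d)) :
    mAct A (x - y) = mAct A x - mAct A y := by
  simp only [mAct]
  ext i
  simp [Matrix.mulVec, dotProduct, PiLp.sub_apply, mul_sub, Finset.sum_sub_distrib]

lemma mAct_smul {d : ℕ} (A : Matrix (Fin d) (Fin d) ℝ) (c : ℝ) (x : EuclideanSpace ℝ (Fin d)) :
    mAct A (c • x) = c • mAct A x := by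
  simp only [mAct]
  ext i
  simp [Matrix.mulVec, dotProduct, PiLp.smul_apply, Finset.mul_sum, mul_left_comm]

lemma sub_mAct {d : ℕ} (A B : Matrix (Fin d) (Fin d) ℝ) (x : EuclideanSpace ℝ (Fin d)) :
    mAct (A - B) x = mAct A x - mAct B x := by
  simp only [mAct]
  ext i
  simp [Matrix.sub_mulVec]

lemma mAct_mAct {d : ℕ} (A B : Matrix (Fin d) (Fin d) ℝ) (x : EuclideanSpace ℝ (Fin d)) :
    mAct A (mAct B x) = mAct (A * B) x := by
  simp only [mAct]
  ext i
  rw [← Matrix.mulVec_mulVec]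

/-- **EXTRA is a saddle point method.**  Let `U = (Z̃ − Z)^{1/2}` (the positive
semidefinite square root, i.e. `U` is PSD with `U * U = Z̃ − Z`) and define the
dual sequence `vᵗ = ∑_{s=0}^{t} U xˢ`.  If `(xᵗ)` satisfies the EXTRA recursion
(`x¹ = Z x⁰ − α ∇f(x⁰)`, `x^{t+1} = (I+Z)xᵗ − Z̃ x^{t−1} − α(∇f(xᵗ) − ∇f(x^{t−1}))`),
then the pair `(xᵗ, vᵗ)` satisfies the primal-dual (saddle point) recursion of the
augmented Lagrangian `L(x,v) = f(x) + (1/α) vᵀUx + (1/2α) xᵀ(I−Z̃)x` with stepsize `α`: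
`x^{t+1} = xᵗ − [α ∇f(xᵗ) + (I − Z̃)xᵗ + U vᵗ]` and `v^{t+1} = vᵗ + U x^{t+1}`. -/
theorem extra_saddle_point_recursion
    {d : ℕ} (f : EuclideanSpace ℝ (Fin d) → ℝ) (hf : Differentiable ℝ f)
    (α : ℝ) (hα : 0 < α)
    (Z Zt U : Matrix (Fin d) (Fin d) ℝ)
    (hZsym : Z.IsSymm) (hZtsym : Zt.IsSymm)
    (hZZt : (Zt - Z).PosSemidef)
    (hU : U.PosSemidef) (hU2 : U * U = Zt - Z)
    (x v : ℕ → EuclideanSpace ℝ (Fin d))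
    (hinit : x 1 = mAct Z (x 0) - α • gradient f (x 0))
    (hrec : ∀ t : ℕ, x (t+2) = x (t+1) + mAct Z (x (t+1)) - mAct Zt (x t)
        - α • (gradient f (x (t+1)) - gradient f (x t)))
    (hv : ∀ t, v t = ∑ s ∈ Finset.range (t+1), mAct U (x s)) :
    (∀ t, x (t+1) = x t - (α • gradient f (x t) + (x t - mAct Zt (x t)) + mAct U (v t)))
    ∧ (∀ t, v (t+1) = v t + mAct U (x (t+1))) := by
  have hvstep : ∀ t, v (t+1) = v t + mAct U (x (t+1)) := by
    intro t
    rw [hv t, hv (t+1), Finset.sum_range_succ]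
  refine ⟨?_, hvstep⟩
  intro t
  induction t with
  | zero =>
      have hv0 : v 0 = mAct U (x 0) := by simp [hv 0]
      rw [hinit, hv0, mAct_mAct, hU2, sub_mAct]
      module
  | succ t ih =>
      have hUv : mAct U (v t) = x t - x (t+1) - (α • gradient f (x t) + (x t - mAct Zt (x t))) := by
        rw [ih]; module
      have h2 := hrec t
      rw [hvstep t, mAct_add, mAct_mAct, hU2, sub_mAct, hUv, h2]
      module
end
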